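/- Let Λ = Z_p[[T]], and let 0 → M → N → N/M → 0 be an exact sequence of Λ-modules with M free and N containing no nonzero finite Λ-submodule. Then N/M contains no nonzero finite Λ-submodule. -/

import Mathlib

open PowerSeries

/-- In a local ring, a nonunit is in the Jacobson radical of `⊥`. -/
lemma mem_jacobson_bot_of_not_isUnit {R : Type*} [CommRing R] [IsLocalRing R]
    {x : R} (hx : ¬ IsUnit x) : x ∈ Ideal.jacobson (⊥ : Ideal R) := by
  rw [Ideal.mem_jacobson_bot]
  intro y
  have h1 : x * y + 1 = 1 - (-(x * y)) := by ring
  rw [h1]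
  apply IsLocalRing.isUnit_one_sub_self_of_mem_nonunits
  rw [mem_nonunits_iff]
  intro h
  have h' : IsUnit (x * y) := by rwa [IsUnit.neg_iff] at h
  exact hx (isUnit_of_mul_isUnit_left h')

/-- If `X^m * f = C r * g` in `R⟦X⟧` then `C r` divides `f`. -/
lemma dvd_of_X_pow_mul_eq {R : Type*} [CommRing R] {f g : PowerSeries R} {r : R} {m : ℕ}
    (h : X ^ m * f = PowerSeries.C r * g) : ∃ c, f = PowerSeries.C r * c := by
  refine ⟨PowerSeries.mk fun k => PowerSeries.coeff (k + m) g, ?_⟩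
  ext k
  rw [PowerSeries.coeff_C_mul, PowerSeries.coeff_mk]
  have := congrArg (PowerSeries.coeff (k + m)) h
  rwa [PowerSeries.coeff_X_pow_mul, PowerSeries.coeff_C_mul] at this

/-- Every finite submodule is killed by a power of any element of the Jacobson radical. -/
lemma exists_pow_smul_eq_zero {R M : Type*} [CommRing R] [AddCommGroup M] [Module R M]
    (S : Submodule R M) (hS : Finite S) {r : R}
    (hr : r ∈ Ideal.jacobson (⊥ : Ideal R)) :
    ∃ n : ℕ, ∀ s ∈ S, r ^ n • s = 0 := by
  set I : Ideal R := Ideal.span {r} with hI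
  set f : ℕ → Submodule R M := fun k => I ^ k • S with hf
  have hle : ∀ k, f k ≤ S := fun k => Submodule.smul_le_right
  have hfin : ∀ k, Finite (f k) := fun k =>
    Finite.of_injective _ (Submodule.inclusion_injective (hle k))
  have hsucc : ∀ k, f (k + 1) = I • f k := by
    intro k
    show I ^ (k + 1) • S = I • I ^ k • S
    rw [pow_succ', ← smul_eq_mul, Submodule.smul_assoc]
  -- find a place where the cardinality stops dropping
  have hne : (Set.range fun k => Nat.card (f k)).Nonempty := ⟨_, ⟨0, rfl⟩⟩
  obtain ⟨k, hk⟩ := Nat.sInf_mem hne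
  have hmin : ∀ j, Nat.card (f k) ≤ Nat.card (f j) := by
    intro j
    exact le_trans (le_of_eq hk) (Nat.sInf_le ⟨j, rfl⟩)
  have hstab : f k = f (k + 1) := by
    have hsub : (f (k + 1) : Set M) ⊆ (f k : Set M) := by
      rw [hsucc k]
      exact Submodule.smul_le_right
    have hcard : (f k : Set M).ncard ≤ (f (k + 1) : Set M).ncard := by
      rw [← Nat.card_coe_set_eq, ← Nat.card_coe_set_eq]
      exact hmin (k + 1)
    have hfinset : (f k : Set M).Finite := by
      have := hfin k
      exact (f k : Set M).toFinite
    exact (SetLike.ext' (Set.eq_of_subset_of_ncard_le hsub hcard hfinset)).symm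
  have hbot : f k = ⊥ := by
    apply Submodule.eq_bot_of_le_smul_of_le_jacobson_bot I (f k)
    · have := hfin k
      exact Module.Finite.iff_fg.mp inferInstance
    · exact le_of_eq (hstab.trans (hsucc k))
    · rw [hI, Ideal.span_le, Set.singleton_subset_iff]
      exact hr
  refine ⟨k, fun s hs => ?_⟩
  have : r ^ k • s ∈ f k :=
    Submodule.smul_mem_smul (Ideal.pow_mem_pow (Ideal.mem_span_singleton_self r) k) hs
  rw [hbot] at this
  exact this

/-- Let `Λ = ℤ_p[[T]]` and let `0 → M → N → N/M → 0` be an exact sequence of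
`Λ`-modules with `M` free and `N` containing no nonzero finite `Λ`-submodule.  Then
`N/M` contains no nonzero finite `Λ`-submodule. -/
theorem quotient_no_finite_submodule (p : ℕ) [Fact p.Prime]
    (N : Type) [AddCommGroup N] [Module (PowerSeries ℤ_[p]) N]
    (M : Submodule (PowerSeries ℤ_[p]) N) [Module.Free (PowerSeries ℤ_[p]) M]
    (hN : ∀ S : Submodule (PowerSeries ℤ_[p]) N, Finite S → S = ⊥) :
    ∀ S : Submodule (PowerSeries ℤ_[p]) (N ⧸ M), Finite S → S = ⊥ := by
  intro S hS
  haveI : NoZeroSMulDivisors (PowerSeries ℤ_[p]) M :=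
    ⟨fun h => smul_eq_zero.mp h⟩
  set π := M.mkQ with hπ
  -- `p` and `X` are in the Jacobson radical of `ℤ_[p]⟦X⟧`
  have hpu : ¬ IsUnit (PowerSeries.C (p : ℤ_[p])) := by
    rw [PowerSeries.isUnit_iff_constantCoeff, PowerSeries.constantCoeff_C]
    rw [PadicInt.not_isUnit_iff, PadicInt.norm_p]
    rw [inv_lt_one_iff₀]
    right
    exact_mod_cast (Fact.out : p.Prime).one_lt
  have hXu : ¬ IsUnit (PowerSeries.X : PowerSeries ℤ_[p]) := by
    rw [PowerSeries.isUnit_iff_constantCoeff, PowerSeries.constantCoeff_X]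
    exact not_isUnit_zero
  obtain ⟨n, hn⟩ := exists_pow_smul_eq_zero S hS (mem_jacobson_bot_of_not_isUnit hpu)
  obtain ⟨m, hm⟩ := exists_pow_smul_eq_zero S hS (mem_jacobson_bot_of_not_isUnit hXu)
  set q : PowerSeries ℤ_[p] := PowerSeries.C (p : ℤ_[p]) ^ n with hq
  have hq0 : q ≠ 0 := by
    apply pow_ne_zero
    intro h
    have h2 := congrArg (PowerSeries.constantCoeff) h
    rw [PowerSeries.constantCoeff_C, map_zero] at h2
    exact_mod_cast (Fact.out : p.Prime).ne_zero (by exact_mod_cast h2)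
  set Y : Submodule (PowerSeries ℤ_[p]) N := S.comap π with hY
  have hMY : M ≤ Y := by
    intro x hx
    show π x ∈ S
    rw [hπ, Submodule.mkQ_apply, (Submodule.Quotient.mk_eq_zero M).mpr hx]
    exact S.zero_mem
  -- the q-torsion of Y is trivial
  set K : Submodule (PowerSeries ℤ_[p]) N :=
    Y ⊓ LinearMap.ker (LinearMap.lsmul (PowerSeries ℤ_[p]) N q) with hK
  have hKmem : ∀ z : N, z ∈ K ↔ z ∈ Y ∧ q • z = 0 := by
    intro z
    rw [hK, Submodule.mem_inf, LinearMap.mem_ker, LinearMap.lsmul_apply]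
  have hKbot : K = ⊥ := by
    apply hN
    have hinj : Function.Injective
        (fun x : K => (⟨π x.1, ((hKmem x.1).mp x.2).1⟩ : S)) := by
      intro x y hxy
      have h1 : π (x.1 - y.1) = 0 := by
        rw [map_sub, sub_eq_zero]
        exact congrArg Subtype.val hxy
      rw [hπ, Submodule.mkQ_apply, Submodule.Quotient.mk_eq_zero] at h1
      have h2 : q • (x.1 - y.1) = 0 := by
        rw [smul_sub, ((hKmem x.1).mp x.2).2, ((hKmem y.1).mp y.2).2, sub_zero]
      have h3 : q • (⟨x.1 - y.1, h1⟩ : M) = 0 := by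
        apply Subtype.val_injective
        rw [SetLike.val_smul, ZeroMemClass.coe_zero]
        exact h2
      rcases smul_eq_zero.mp h3 with h | h
      · exact absurd h hq0
      · have h4 : x.1 - y.1 = 0 := congrArg Subtype.val h
        exact Subtype.ext (sub_eq_zero.mp h4)
    exact Finite.of_injective _ hinj
  -- now show S = ⊥
  rw [eq_bot_iff]
  rintro s hs
  obtain ⟨y, rfl⟩ := M.mkQ_surjective s
  have hyY : y ∈ Y := hs
  have haM : q • y ∈ M := by
    have h1 : π (q • y) = 0 := by
      rw [map_smul]
      exact hn _ hs
    rwa [hπ, Submodule.mkQ_apply, Submodule.Quotient.mk_eq_zero] at h1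
  have hbM : (PowerSeries.X : PowerSeries ℤ_[p]) ^ m • y ∈ M := by
    have h1 : π ((PowerSeries.X : PowerSeries ℤ_[p]) ^ m • y) = 0 := by
      rw [map_smul]
      exact hm _ hs
    rwa [hπ, Submodule.mkQ_apply, Submodule.Quotient.mk_eq_zero] at h1
  set a : M := ⟨q • y, haM⟩ with ha
  set b : M := ⟨(PowerSeries.X : PowerSeries ℤ_[p]) ^ m • y, hbM⟩ with hb
  have hab : (PowerSeries.X : PowerSeries ℤ_[p]) ^ m • a = q • b := by
    apply Subtype.val_injective
    show (PowerSeries.X : PowerSeries ℤ_[p]) ^ m • (q • y)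
        = q • ((PowerSeries.X : PowerSeries ℤ_[p]) ^ m • y)
    rw [smul_smul, smul_smul, mul_comm]
  -- use freeness of M: q divides a
  set B := Module.Free.chooseBasis (PowerSeries ℤ_[p]) M with hB
  have hcoord : ∀ i, ∃ c, B.repr a i = q * c := by
    intro i
    have h1 : (PowerSeries.X : PowerSeries ℤ_[p]) ^ m * B.repr a i = q * B.repr b i := by
      have h2 := congrArg (fun z => B.repr z i) hab
      simpa [map_smul, smul_eq_mul] using h2
    have h2 : (PowerSeries.X : PowerSeries ℤ_[p]) ^ m * B.repr a i
        = PowerSeries.C ((p : ℤ_[p]) ^ n) * B.repr b i := by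
      rw [h1, hq, map_pow]
    obtain ⟨c, hc⟩ := dvd_of_X_pow_mul_eq h2
    exact ⟨c, by rw [hc, hq, map_pow]⟩
  have hdvd : ∃ c : M, a = q • c := by
    choose c hc using hcoord
    have hczero : ∀ i, B.repr a i = 0 → c i = 0 := by
      intro i h
      have h1 : q * c i = 0 := by rw [← hc i, h]
      rcases mul_eq_zero.mp h1 with h2 | h2
      · exact absurd h2 hq0
      · exact h2
    set g : Module.Free.ChooseBasisIndex (PowerSeries ℤ_[p]) ↥M →₀ PowerSeries ℤ_[p] :=
      Finsupp.onFinset (B.repr a).support c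
        (fun i hi => Finsupp.mem_support_iff.mpr (fun h0 => hi (hczero i h0))) with hg
    refine ⟨B.repr.symm g, ?_⟩
    rw [← LinearEquiv.symm_apply_apply B.repr a, ← map_smul]
    congr 1
    refine Finsupp.ext fun i => ?_
    rw [Finsupp.smul_apply, smul_eq_mul, hg, Finsupp.onFinset_apply]
    exact hc i
  obtain ⟨c, hc⟩ := hdvd
  have hyK : y - c.1 ∈ K := by
    rw [hKmem]
    constructor
    · exact Y.sub_mem hyY (hMY c.2)
    · rw [smul_sub]
      have h1 : q • y = q • c.1 := by
        have h2 := congrArg Subtype.val hc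
        rw [ha, SetLike.val_smul] at h2
        exact h2
      rw [h1, sub_self]
  rw [hKbot, Submodule.mem_bot] at hyK
  have hyM : y ∈ M := by
    rw [sub_eq_zero] at hyK
    rw [hyK]
    exact c.2
  show π y ∈ (⊥ : Submodule (PowerSeries ℤ_[p]) (N ⧸ M))
  rw [Submodule.mem_bot, hπ, Submodule.mkQ_apply, Submodule.Quotient.mk_eq_zero]
  exact hyM
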